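/- Let q ∈ (0,1), p ∈ [0,1] and β ∈ (0, 1/2). Then for every γ ∈ [0,1], the Lebesgue measure (length) of the intersection [β, 1−β] ∩ I_γ is at most 1/(2−q) − β, where I_γ = [p(1−q)/(1 − (1−γ)q), (p(1−q) + (1−γ)q)/(1 − γq)]. In particular, max over γ ∈ [0,1] of |[β, 1−β] ∩ I_γ| ≤ 1/(2−q) − β. -/
import Mathlib


open MeasureTheory

theorem semicautious_control_interval_intersection_bound
    (q p β : ℝ) (hq : q ∈ Set.Ioo (0 : ℝ) 1) (hp : p ∈ Set.Icc (0 : ℝ) 1)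
    (hβ : β ∈ Set.Ioo (0 : ℝ) (1 / 2)) :
    ∀ γ ∈ Set.Icc (0 : ℝ) 1,
      volume (Set.Icc β (1 - β)
          ∩ Set.Icc (p * (1 - q) / (1 - (1 - γ) * q))
              ((p * (1 - q) + (1 - γ) * q) / (1 - γ * q)))
        ≤ ENNReal.ofReal (1 / (2 - q) - β) := by
  rintro γ ⟨hγ0, hγ1⟩
  obtain ⟨hq0, hq1⟩ := hq
  obtain ⟨hp0, hp1⟩ := hp
  obtain ⟨hβ0, hβ1⟩ := hβ
  have h2q : (0:ℝ) < 2 - q := by linarith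
  have hd1 : (0:ℝ) < 1 - (1 - γ) * q := by nlinarith
  have hd2 : (0:ℝ) < 1 - γ * q := by nlinarith
  set a := p * (1 - q) / (1 - (1 - γ) * q) with ha
  set b := (p * (1 - q) + (1 - γ) * q) / (1 - γ * q) with hb
  rw [Set.Icc_inter_Icc, Real.volume_Icc]
  apply ENNReal.ofReal_le_ofReal
  rcases le_or_gt (p * (2 - q)) (1 - (1 - γ) * q) with hc | hc
  · have hble : b ≤ 1 / (2 - q) := by
      rw [hb, div_le_div_iff₀ hd2 h2q]
      nlinarith [mul_le_mul_of_nonneg_right hc (by linarith : (0:ℝ) ≤ 1 - q)]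
    have h1 : min (1 - β) b ≤ 1 / (2 - q) := le_trans (min_le_right _ _) hble
    have h2 : β ≤ max β a := le_max_left _ _
    linarith
  · have hage : (1 - q) / (2 - q) ≤ a := by
      rw [ha, div_le_div_iff₀ h2q hd1]
      nlinarith [mul_le_mul_of_nonneg_right hc.le (by linarith : (0:ℝ) ≤ 1 - q)]
    have h1 : min (1 - β) b ≤ 1 - β := min_le_left _ _
    have h2 : (1 - q) / (2 - q) ≤ max β a := le_trans hage (le_max_right _ _)
    have key : 1 - (1 - q) / (2 - q) = 1 / (2 - q) := by field_simp; ring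
    linarith
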